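/- Let κ > 0, μ ∈ [−π, π), and let c(κ) > 0 be the normalizing constant such that f(x) := c(κ)·exp(κ·cos(x − μ)) satisfies ∫_{−π}^{π} f(x) dx = 1. Regard f as defined for all x ∈ ℝ by the same formula (its 2π-periodic extension). Then for every y ∈ ℝ, ∫_{−π}^{π} f(x)·log( f(x) / f(x + y) ) dx = 2·c(κ)·κ·sin²(y/2)·C(κ), where C(κ) := ∫_{−π}^{π} exp(κ·cos(x − μ))·cos(x − μ) dx, and consequently ∫_{−π}^{π} f(x)·log( f(x) / f(x + y) ) dx ≤ p∗·y² with p∗ = c(κ)·κ·C(κ)/2. -/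
import Mathlib


open Real MeasureTheory Set
open intervalIntegral

lemma sin_int_zero (κ : ℝ) :
    (∫ u in (-Real.pi)..Real.pi, Real.exp (κ * Real.cos u) * Real.sin u) = 0 := by
  have h : (∫ u in (-Real.pi)..Real.pi, Real.exp (κ * Real.cos u) * Real.sin u)
      = ∫ u in (-Real.pi)..Real.pi, Real.exp (κ * Real.cos (-u)) * Real.sin (-u) := by
    rw [integral_comp_neg (fun u => Real.exp (κ * Real.cos u) * Real.sin u)]
    simp
  simp only [Real.cos_neg, Real.sin_neg, mul_neg, intervalIntegral.integral_neg] at h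
  linarith

lemma shift_int (μ : ℝ) (g : ℝ → ℝ) (hg : Function.Periodic g (2 * Real.pi)) :
    (∫ x in (-Real.pi)..Real.pi, g (x - μ)) = ∫ u in (-Real.pi)..Real.pi, g u := by
  have h1 : (∫ x in (-Real.pi)..Real.pi, g (x - μ))
      = ∫ u in (-Real.pi - μ)..(Real.pi - μ), g u := by
    simpa using intervalIntegral.integral_comp_sub_right g μ
  rw [h1]
  have := hg.intervalIntegral_add_eq (-Real.pi - μ) (-Real.pi)
  have e1 : -Real.pi - μ + 2 * Real.pi = Real.pi - μ := by ring
  have e2 : -Real.pi + 2 * Real.pi = Real.pi := by ring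
  rwa [e1, e2] at this

lemma cos_int_nonneg (κ : ℝ) (hκ : 0 ≤ κ) :
    0 ≤ ∫ u in (-Real.pi)..Real.pi, Real.exp (κ * Real.cos u) * Real.cos u := by
  set g : ℝ → ℝ := fun u => Real.exp (κ * Real.cos u) * Real.cos u with hg
  have hcont : Continuous g := by fun_prop
  have hint : ∀ a b : ℝ, IntervalIntegrable g volume a b :=
    fun a b => hcont.intervalIntegrable a b
  have hpi := Real.pi_pos
  have hsplit1 : (∫ u in (-Real.pi)..Real.pi, g u)
      = (∫ u in (-Real.pi)..(0:ℝ), g u) + ∫ u in (0:ℝ)..Real.pi, g u :=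
    (integral_add_adjacent_intervals (hint _ _) (hint _ _)).symm
  have heven : (∫ u in (-Real.pi)..(0:ℝ), g u) = ∫ u in (0:ℝ)..Real.pi, g u := by
    have := integral_comp_neg g (a := 0) (b := Real.pi)
    simp only [neg_zero] at this
    rw [← this]
    apply intervalIntegral.integral_congr
    intro x _
    simp [hg]
  have hsplit2 : (∫ u in (0:ℝ)..Real.pi, g u)
      = (∫ u in (0:ℝ)..(Real.pi/2), g u) + ∫ u in (Real.pi/2)..Real.pi, g u :=
    (integral_add_adjacent_intervals (hint _ _) (hint _ _)).symm
  have hrefl : (∫ u in (Real.pi/2)..Real.pi, g u)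
      = ∫ x in (0:ℝ)..(Real.pi/2), g (Real.pi - x) := by
    rw [integral_comp_sub_left g Real.pi, sub_zero,
      show Real.pi - Real.pi/2 = Real.pi/2 by ring]
  have hkey : 0 ≤ (∫ u in (0:ℝ)..(Real.pi/2), g u) + ∫ x in (0:ℝ)..(Real.pi/2), g (Real.pi - x) := by
    have hint2 : IntervalIntegrable (fun x => g (Real.pi - x)) volume 0 (Real.pi/2) :=
      (hcont.comp (continuous_const.sub continuous_id)).intervalIntegrable _ _
    rw [← intervalIntegral.integral_add (hint _ _) hint2]
    apply intervalIntegral.integral_nonneg (by positivity)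
    intro x hx
    simp only [Set.mem_Icc] at hx
    have hcos : 0 ≤ Real.cos x := Real.cos_nonneg_of_mem_Icc ⟨by linarith, hx.2⟩
    have : g (Real.pi - x) = -(Real.exp (-(κ * Real.cos x)) * Real.cos x) := by
      simp [hg, Real.cos_pi_sub]
    rw [this, hg]
    have hle : Real.exp (-(κ * Real.cos x)) ≤ Real.exp (κ * Real.cos x) :=
      Real.exp_le_exp.mpr (by nlinarith)
    show 0 ≤ Real.exp (κ * Real.cos x) * Real.cos x + -(Real.exp (-(κ * Real.cos x)) * Real.cos x)
    nlinarith [mul_nonneg (sub_nonneg.mpr hle) hcos]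
  rw [hsplit1, heven, hsplit2, hrefl]
  linarith

/-- Kullback–Leibler shift computation for the von Mises density
`f(x) = c(κ) exp (κ cos (x - μ))` (extended `2π`-periodically to `ℝ`): for every `y`,
`∫_{-π}^{π} f log (f / f(· + y)) = 2 c κ sin²(y/2) C(κ)` with
`C(κ) = ∫_{-π}^{π} exp (κ cos (x - μ)) cos (x - μ) dx`, and consequently this quantity is at most
`p∗ y²` with `p∗ = c κ C(κ) / 2`. -/
theorem stmt12 (κ μ : ℝ) (hκ : 0 < κ) (hμ : μ ∈ Set.Ico (-Real.pi) Real.pi)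
    (c : ℝ) (hc : 0 < c)
    (hnorm : (∫ x in (-Real.pi)..Real.pi, c * Real.exp (κ * Real.cos (x - μ))) = 1) :
    ∀ y : ℝ,
      ((∫ x in (-Real.pi)..Real.pi,
          (c * Real.exp (κ * Real.cos (x - μ))) *
            Real.log ((c * Real.exp (κ * Real.cos (x - μ))) /
              (c * Real.exp (κ * Real.cos (x + y - μ)))))
        = 2 * c * κ * (Real.sin (y / 2)) ^ 2 *
            (∫ x in (-Real.pi)..Real.pi,
              Real.exp (κ * Real.cos (x - μ)) * Real.cos (x - μ))) ∧
      ((∫ x in (-Real.pi)..Real.pi,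
          (c * Real.exp (κ * Real.cos (x - μ))) *
            Real.log ((c * Real.exp (κ * Real.cos (x - μ))) /
              (c * Real.exp (κ * Real.cos (x + y - μ)))))
        ≤ (c * κ *
            (∫ x in (-Real.pi)..Real.pi,
              Real.exp (κ * Real.cos (x - μ)) * Real.cos (x - μ)) / 2) * y ^ 2) := by
  intro y
  set C : ℝ := ∫ x in (-Real.pi)..Real.pi, Real.exp (κ * Real.cos (x - μ)) * Real.cos (x - μ)
    with hC
  set S : ℝ := ∫ x in (-Real.pi)..Real.pi, Real.exp (κ * Real.cos (x - μ)) * Real.sin (x - μ)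
    with hS
  -- C equals the unshifted integral, hence nonnegative
  have hCshift : C = ∫ u in (-Real.pi)..Real.pi, Real.exp (κ * Real.cos u) * Real.cos u := by
    rw [hC]
    exact shift_int μ (fun u => Real.exp (κ * Real.cos u) * Real.cos u)
      (fun x => by simp [Real.cos_add_two_pi])
  have hCnn : 0 ≤ C := hCshift ▸ cos_int_nonneg κ hκ.le
  have hSzero : S = 0 := by
    rw [hS, shift_int μ (fun u => Real.exp (κ * Real.cos u) * Real.sin u)
      (fun x => by simp [Real.cos_add_two_pi, Real.sin_add_two_pi])]
    exact sin_int_zero κ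
  -- pointwise identity for the integrand
  have hpt : ∀ x : ℝ,
      (c * Real.exp (κ * Real.cos (x - μ))) *
        Real.log ((c * Real.exp (κ * Real.cos (x - μ))) /
          (c * Real.exp (κ * Real.cos (x + y - μ))))
      = (c * κ * (1 - Real.cos y)) * (Real.exp (κ * Real.cos (x - μ)) * Real.cos (x - μ))
        + (c * κ * Real.sin y) * (Real.exp (κ * Real.cos (x - μ)) * Real.sin (x - μ)) := by
    intro x
    rw [mul_div_mul_left _ _ hc.ne', ← Real.exp_sub, Real.log_exp,
      show x + y - μ = (x - μ) + y by ring, Real.cos_add]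
    ring
  have hI : (∫ x in (-Real.pi)..Real.pi,
      (c * Real.exp (κ * Real.cos (x - μ))) *
        Real.log ((c * Real.exp (κ * Real.cos (x - μ))) /
          (c * Real.exp (κ * Real.cos (x + y - μ)))))
      = (c * κ * (1 - Real.cos y)) * C + (c * κ * Real.sin y) * S := by
    rw [intervalIntegral.integral_congr (g := fun x =>
      (c * κ * (1 - Real.cos y)) * (Real.exp (κ * Real.cos (x - μ)) * Real.cos (x - μ))
        + (c * κ * Real.sin y) * (Real.exp (κ * Real.cos (x - μ)) * Real.sin (x - μ)))
      (fun x _ => hpt x)]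
    rw [intervalIntegral.integral_add
      (((Continuous.intervalIntegrable (by fun_prop) _ _ : IntervalIntegrable
        (fun x => (c * κ * (1 - Real.cos y)) * (Real.exp (κ * Real.cos (x - μ)) * Real.cos (x - μ)))
        volume (-Real.pi) Real.pi)))
      (((Continuous.intervalIntegrable (by fun_prop) _ _ : IntervalIntegrable
        (fun x => (c * κ * Real.sin y) * (Real.exp (κ * Real.cos (x - μ)) * Real.sin (x - μ)))
        volume (-Real.pi) Real.pi))),
      intervalIntegral.integral_const_mul, intervalIntegral.integral_const_mul]
  have hhalf : 1 - Real.cos y = 2 * (Real.sin (y / 2)) ^ 2 := by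
    have := Real.sin_sq_eq_half_sub (y / 2)
    rw [show 2 * (y / 2) = y by ring] at this
    linarith
  constructor
  · rw [hI, hSzero, hhalf]; ring
  · rw [hI, hSzero, hhalf]
    have hsq : (Real.sin (y / 2)) ^ 2 ≤ (y / 2) ^ 2 := Real.sin_sq_le_sq
    have hck : 0 ≤ c * κ := by positivity
    nlinarith [mul_nonneg hck hCnn, mul_le_mul_of_nonneg_left hsq (mul_nonneg hck hCnn)]
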